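/- The map T : ℝ² → ℝ² defined by T(p,y) = (y+1, y²+2) is not pseudomonotone on [1,5] × [-1,1], even though g(y) = y+1 is affine and G(y) = {y²+2} is pseudomonotone on ℝ. Specifically, at the points (p₁,y₁) = (5,-1) and (p₂,y₂) = (1,1), one has ⟨T(p₁,y₁), (p₂,y₂) - (p₁,y₁)⟩ ≥ 0 but ⟨T(p₂,y₂), (p₂,y₂) - (p₁,y₁)⟩ < 0. -/

import Mathlib

open RealInnerProductSpace

noncomputable def T7 : EuclideanSpace ℝ (Fin 2) → EuclideanSpace ℝ (Fin 2) := fun x =>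
  WithLp.toLp 2 (fun i : Fin 2 => if i = 0 then x 1 + 1 else (x 1) ^ 2 + 2)

noncomputable def u7 : EuclideanSpace ℝ (Fin 2) := WithLp.toLp 2 (fun i : Fin 2 => if i = 0 then (5 : ℝ) else -1)

noncomputable def v7 : EuclideanSpace ℝ (Fin 2) := WithLp.toLp 2 (fun i : Fin 2 => if i = 0 then (1 : ℝ) else 1)

/-- `T(p,y) = (y+1, y²+2)` is not pseudomonotone on `[1,5] × [-1,1]`, even though `g(y) = y+1`
is affine and `G(y) = {y²+2}` is pseudomonotone on `ℝ`; the failure is witnessed at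
`(5,-1)` and `(1,1)`. -/
theorem stmt_7 :
    (∃ a b : ℝ, ∀ y : ℝ, y + 1 = a * y + b) ∧
    (∀ v w : ℝ, (v ^ 2 + 2) * (w - v) ≥ 0 → (w ^ 2 + 2) * (w - v) ≥ 0) ∧
    u7 0 ∈ Set.Icc (1 : ℝ) 5 ∧ u7 1 ∈ Set.Icc (-1 : ℝ) 1 ∧
    v7 0 ∈ Set.Icc (1 : ℝ) 5 ∧ v7 1 ∈ Set.Icc (-1 : ℝ) 1 ∧
    ⟪T7 u7, v7 - u7⟫ ≥ 0 ∧ ⟪T7 v7, v7 - u7⟫ < 0 ∧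
    ¬ (∀ u : EuclideanSpace ℝ (Fin 2), u 0 ∈ Set.Icc (1 : ℝ) 5 → u 1 ∈ Set.Icc (-1 : ℝ) 1 →
        ∀ v : EuclideanSpace ℝ (Fin 2), v 0 ∈ Set.Icc (1 : ℝ) 5 → v 1 ∈ Set.Icc (-1 : ℝ) 1 →
        ⟪T7 u, v - u⟫ ≥ 0 → ⟪T7 v, v - u⟫ ≥ 0) := by

  have hin1 : ⟪T7 u7, v7 - u7⟫ = (6:ℝ) := by
    simp [PiLp.inner_apply, Fin.sum_univ_two, T7, u7, v7]
    norm_num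
  have hin2 : ⟪T7 v7, v7 - u7⟫ = (-2:ℝ) := by
    simp [PiLp.inner_apply, Fin.sum_univ_two, T7, u7, v7]
    norm_num
  refine ⟨⟨1, 1, fun y => by ring⟩, ?_, ?_, ?_, ?_, ?_, ?_, ?_, ?_⟩
  · intro v w h
    rcases le_or_gt v w with hle | hlt
    · have : (0:ℝ) ≤ w ^ 2 + 2 := by positivity
      exact mul_nonneg this (by linarith)
    · exfalso
      have h2 : (0:ℝ) < v ^ 2 + 2 := by positivity
      nlinarith
  · simp [u7]
  · simp [u7]
  · simp [v7]
  · simp [v7]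
  · rw [hin1]; norm_num
  · rw [hin2]; norm_num
  · intro h
    have := h u7 (by simp [u7]) (by simp [u7]) v7 (by simp [v7]) (by simp [v7])
      (by rw [hin1]; norm_num)
    rw [hin2] at this; norm_num at this
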